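/- Let F be a field of prime characteristic p, a ∈ F, and suppose f = X^p - X - a has no root in F. Let K = F[α] where α is a root of f. Then the minimal polynomial of α^(p-1) over F is X^p + (X-1)^(p-1) - a^(p-1) - 1. -/

import Mathlib

open Polynomial

lemma zmod_prod (p : ℕ) [Fact p.Prime] : (X ^ p - X : (ZMod p)[X]) = ∏ i : ZMod p, (X - C i) := by
  have hp := (Fact.out : p.Prime)
  have hcard : Fintype.card (ZMod p) = p := ZMod.card p
  have hmonic : (X ^ p - X : (ZMod p)[X]).Monic := by
    rw [sub_eq_add_neg]
    refine monic_X_pow_add ?_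
    refine lt_of_le_of_lt (degree_neg (X : (ZMod p)[X]) ▸ degree_X_le) ?_
    exact_mod_cast hp.one_lt
  have hroots : (X ^ p - X : (ZMod p)[X]).roots = Finset.univ.val := by
    have := FiniteField.roots_X_pow_card_sub_X (ZMod p)
    rwa [hcard] at this
  have hdeg : (X ^ p - X : (ZMod p)[X]).natDegree = p :=
    FiniteField.X_pow_card_sub_X_natDegree_eq (ZMod p) hp.one_lt
  have hsplits : Splits (X ^ p - X : (ZMod p)[X]) := by
    rw [splits_iff_card_roots, hroots, hdeg]
    simpa using hcard
  have := hsplits.eq_prod_roots_of_monic hmonic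
  rw [hroots] at this
  rw [this]
  rfl

lemma K_prod (p : ℕ) [Fact p.Prime] (K : Type*) [Field K] [CharP K p] :
    (X ^ p - X : K[X]) = ∏ i : ZMod p, (X - C ((ZMod.castHom dvd_rfl K) i)) := by
  have := congrArg (Polynomial.map (ZMod.castHom (dvd_refl p) K)) (zmod_prod p)
  simpa [Polynomial.map_prod] using this

lemma fix_mem (p : ℕ) [Fact p.Prime] {F K : Type*} [Field F] [Field K] [Algebra F K] [CharP F p] [CharP K p]
    (x : K) (hx : x ^ p = x) : ∃ b : F, algebraMap F K b = x := by
  have h := K_prod p K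
  have : eval x (X ^ p - X : K[X]) = 0 := by simp [hx]
  rw [h, eval_prod] at this
  obtain ⟨i, -, hi⟩ := Finset.prod_eq_zero_iff.mp this
  simp only [eval_sub, eval_X, eval_C, sub_eq_zero] at hi
  refine ⟨(ZMod.cast i : F), ?_⟩
  rw [hi]
  have : (ZMod.castHom (dvd_refl p) K) = (algebraMap F K).comp (ZMod.castHom (dvd_refl p) F) :=
    RingHom.ext_zmod _ _
  rw [this]; rfl

lemma sum_fix (p : ℕ) [Fact p.Prime] {K : Type*} [Field K] [CharP K p]
    (M : Multiset K) (h : ∀ x ∈ M, x ^ p = x) : M.sum ^ p = M.sum := by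
  induction M using Multiset.induction with
  | empty => simp [zero_pow (Fact.out : p.Prime).ne_zero]
  | cons a s ih =>
    rw [Multiset.sum_cons, add_pow_char, h a (Multiset.mem_cons_self a s),
      ih fun x hx => h x (Multiset.mem_cons_of_mem hx)]

lemma sum_map_sub_const {K : Type*} [Field K] (M : Multiset K) (α : K) :
    (M.map (fun r => r - α)).sum = M.sum - M.card • α := by
  induction M using Multiset.induction with
  | empty => simp
  | cons a s ih => simp [ih, succ_nsmul]; ring

lemma AS_deg (p : ℕ) [Fact p.Prime] {F K : Type*} [Field F] [Field K] [Algebra F K]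
    [CharP F p] (a : F) (hno : ∀ x : F, x ^ p - x ≠ a)
    (α : K) (hα : α ^ p - α = algebraMap F K a) :
    (minpoly F α).natDegree = p := by
  have hp := (Fact.out : p.Prime)
  haveI : CharP K p := charP_of_injective_algebraMap (algebraMap F K).injective p
  set φ := algebraMap F K with hφ
  set f : F[X] := X ^ p - X - C a with hf
  have hdegrest : (-X - C a : F[X]).degree < (p : WithBot ℕ) := by
    refine lt_of_le_of_lt ((degree_sub_le _ _).trans (max_le (degree_neg (X : F[X]) ▸ degree_X_le)
      (degree_C_le.trans (by norm_num)))) ?_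
    exact_mod_cast hp.one_lt
  have hfeq : f = X ^ p + (-X - C a) := by ring
  have hfmonic : f.Monic := by rw [hfeq]; exact monic_X_pow_add hdegrest
  have hfdeg : f.natDegree = p := by
    rw [hfeq]
    have : (X ^ p + (-X - C a) : F[X]).degree = p := by
      rw [add_comm]
      rw [degree_add_eq_right_of_degree_lt (by rwa [degree_X_pow])]
      exact degree_X_pow p
    exact natDegree_eq_of_degree_eq_some this
  have haeval : (aeval α) f = 0 := by
    simp only [hf, map_sub, map_pow, aeval_X, aeval_C]
    rw [hα]; ring
  have hint : IsIntegral F α := ⟨f, hfmonic, haeval⟩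
  set m := minpoly F α with hm
  have hmdvd : m ∣ f := minpoly.dvd F α haeval
  have hfne : f ≠ 0 := hfmonic.ne_zero
  have hdle : m.natDegree ≤ p := hfdeg ▸ natDegree_le_of_dvd hmdvd hfne
  have hd1 : 0 < m.natDegree := minpoly.natDegree_pos hint
  -- f splits in K
  set ψ := ZMod.castHom (dvd_refl p) K with hψ
  have hfK : f.map φ = ∏ i : ZMod p, (X - C (α + ψ i)) := by
    have h1 : ((X ^ p - X : K[X])).comp (X - C α) = X ^ p - X - C (φ a) := by
      rw [sub_comp, X_comp, pow_comp, X_comp, sub_pow_char]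
      have : (C α : K[X]) ^ p = C (α ^ p) := by rw [← C_pow]
      rw [this]
      rw [show (α : K) ^ p = α + φ a by rw [← hα]; ring]
      push_cast [C_add]
      ring
    have h2 : ((X ^ p - X : K[X])).comp (X - C α) = ∏ i : ZMod p, (X - C (α + ψ i)) := by
      rw [K_prod p K, Polynomial.prod_comp]
      refine Finset.prod_congr rfl fun i _ => ?_
      rw [sub_comp, X_comp, C_comp, sub_sub, ← C_add]
    rw [Polynomial.map_sub, Polynomial.map_sub, Polynomial.map_pow, map_X, map_C, ← h1, h2]
  have hfsplits : (f.map φ).Splits := by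
    rw [hfK]
    exact Splits.prod fun i _ => Splits.X_sub_C _
  have hmsplits : (m.map φ).Splits :=
    Splits.of_dvd hfsplits (Polynomial.map_ne_zero hfne) (Polynomial.map_dvd φ hmdvd)
  set M := (m.map φ).roots with hM
  have hcard : M.card = m.natDegree := by
    rw [hM, (splits_iff_card_roots).mp hmsplits, natDegree_map]
  have hroot : ∀ r ∈ M, r ^ p = r + φ a := by
    intro r hr
    have h0 : (m.map φ).IsRoot r := isRoot_of_mem_roots hr
    have hdvd2 : m.map φ ∣ f.map φ := Polynomial.map_dvd φ hmdvd
    have h1 : eval r (f.map φ) = 0 := by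
      obtain ⟨c, hc⟩ := hdvd2
      rw [hc, eval_mul, show eval r (map φ m) = 0 from h0, zero_mul]
    rw [Polynomial.map_sub, Polynomial.map_sub, Polynomial.map_pow, map_X, map_C] at h1
    simp only [eval_sub, eval_pow, eval_X, eval_C] at h1
    linear_combination h1
  set s := (M.map (fun r => r - α)).sum with hs
  have hαp : α ^ p = α + φ a := by rw [← hα]; ring
  have hsfix : s ^ p = s := by
    refine sum_fix p _ ?_
    intro x hx
    obtain ⟨r, hr, rfl⟩ := Multiset.mem_map.mp hx
    rw [sub_pow_char, hroot r hr, hαp]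
    ring
  obtain ⟨b, hb⟩ := fix_mem (F := F) p s hsfix
  have hnext : φ m.nextCoeff = -M.sum :=
    (nextCoeff_map (algebraMap F K).injective m) ▸
      hmsplits.nextCoeff_eq_neg_sum_roots_of_monic ((minpoly.monic hint).map φ)
  have hMsum : M.sum = s + (m.natDegree : K) * α := by
    rw [hs, sum_map_sub_const, hcard, nsmul_eq_mul]
    ring
  -- now conclude
  by_contra hne
  have hdlt : m.natDegree < p := lt_of_le_of_ne hdle hne
  have hdne : ((m.natDegree : ℕ) : F) ≠ 0 := by
    rw [Ne, CharP.cast_eq_zero_iff F p]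
    exact fun hdvd => absurd (Nat.le_of_dvd hd1 hdvd) (not_le.mpr hdlt)
  set x : F := (-m.nextCoeff - b) / (m.natDegree : F) with hx
  have hαx : α = φ x := by
    have h1 : φ ((m.natDegree : F)) * α = φ (-m.nextCoeff - b) := by
      rw [map_natCast, map_sub, map_neg]
      linear_combination hnext - hMsum + hb
    have h2 : φ ((m.natDegree : F)) ≠ 0 := fun h =>
      hdne ((algebraMap F K).injective (by rw [h, map_zero]))
    rw [hx, map_div₀, eq_div_iff h2, mul_comm]
    exact h1
  refine hno x ?_
  have : φ (x ^ p - x) = φ a := by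
    rw [map_sub, map_pow, ← hαx, hα]
  exact (algebraMap F K).injective this

open IntermediateField in
theorem minpoly_pow_pred_of_artin_schreier {F K : Type*} [Field F] [Field K] [Algebra F K]
    (p : ℕ) (hp : p.Prime) [CharP F p] (a : F)
    (hno : ∀ x : F, x ^ p - x ≠ a)
    (α : K) (hα : α ^ p - α = algebraMap F K a)
    (hadj : Algebra.adjoin F {α} = ⊤) :
    minpoly F (α ^ (p - 1)) =
      X ^ p + (X - 1) ^ (p - 1) - C (a ^ (p - 1)) - 1 := by
  haveI : Fact p.Prime := ⟨hp⟩
  haveI : CharP K p := charP_of_injective_algebraMap (algebraMap F K).injective p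
  set φ := algebraMap F K with hφ
  obtain ⟨q, rfl⟩ : ∃ q, p = q + 1 := ⟨p - 1, (Nat.succ_pred_eq_of_pos hp.pos).symm⟩
  simp only [Nat.add_sub_cancel] at *
  set p := q + 1 with hpq
  -- basic facts
  have ha : a ≠ 0 := by
    intro h
    exact hno 0 (by rw [h, zero_pow hp.ne_zero, sub_zero])
  have ha' : φ a ≠ 0 := fun h => ha ((algebraMap F K).injective (by rw [map_zero]; exact h))
  have hα0 : α ≠ 0 := by
    intro h
    rw [h, zero_pow hp.ne_zero, sub_zero] at hα
    exact ha' hα.symm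
  have hαp : α ^ p = α + φ a := by rw [← hα]; ring
  set β := α ^ q with hβ
  have hβ0 : β ≠ 0 := pow_ne_zero _ hα0
  have hαβ : α * β = α + φ a := by
    rw [hβ, ← pow_succ', ← hpq, hαp]
  -- the candidate polynomial
  set g : F[X] := X ^ p + (X - 1) ^ q - C (a ^ q) - 1 with hg
  have hrdeg : ((X - 1 : F[X]) ^ q - C (a ^ q) - 1).degree < (p : WithBot ℕ) := by
    have h1 : ((X - 1 : F[X]) ^ q).degree ≤ (q : WithBot ℕ) := by
      rw [show (1 : F[X]) = C 1 by simp, degree_pow, degree_X_sub_C]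
      simp
    have h2 : ((X - 1 : F[X]) ^ q - C (a ^ q) - 1).degree ≤ (q : WithBot ℕ) := by
      refine (degree_sub_le _ _).trans (max_le ((degree_sub_le _ _).trans
        (max_le h1 (degree_C_le.trans ?_))) (degree_one_le.trans ?_)) <;>
        exact_mod_cast Nat.zero_le q
    exact lt_of_le_of_lt h2 (by exact_mod_cast Nat.lt_succ_self q)
  have hgeq : g = X ^ p + ((X - 1) ^ q - C (a ^ q) - 1) := by rw [hg]; ring
  have hgmonic : g.Monic := by rw [hgeq]; exact monic_X_pow_add hrdeg
  have hgdeg : g.natDegree = p := by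
    rw [hgeq]
    refine natDegree_eq_of_degree_eq_some ?_
    rw [add_comm, degree_add_eq_right_of_degree_lt (by rwa [degree_X_pow])]
    exact degree_X_pow p
  -- β is a root of g
  have hkey1 : β * (β - 1) ^ q = (φ a) ^ q := by
    calc β * (β - 1) ^ q = (α * (β - 1)) ^ q := by rw [hβ, mul_pow]
    _ = (φ a) ^ q := by rw [mul_sub, mul_one, hαβ]; ring_nf
  have hkey2 : α * β ^ p * β = α + φ a + (φ a) ^ p := by
    have e1 : α * β ^ p * β = α ^ (p * p) := by
      rw [hβ, ← pow_mul]
      rw [show p * p = 1 + q * p + q by rw [hpq]; ring]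
      rw [pow_add, pow_add, pow_one]
    rw [e1, pow_mul, hαp, add_pow_char, hαp]
  have hg0 : aeval β g = 0 := by
    have : aeval β g = β ^ p + (β - 1) ^ q - (φ a) ^ q - 1 := by
      simp [hg, map_pow]; rfl
    rw [this]
    refine mul_left_cancel₀ (mul_ne_zero hα0 hβ0) ?_
    rw [mul_zero]
    linear_combination α * hkey1 + hkey2 - ((φ a) ^ q + 1) * hαβ
  have hβint : IsIntegral F β := ⟨g, hgmonic, hg0⟩
  have hfmon : (X ^ p - X - C a : F[X]).Monic := by
    have he : (X ^ p - X - C a : F[X]) = X ^ p + (-X - C a) := by ring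
    rw [he]
    refine monic_X_pow_add ?_
    have h2 : (-X - C a : F[X]).degree ≤ (1 : WithBot ℕ) :=
      (degree_sub_le _ _).trans (max_le (degree_neg (X : F[X]) ▸ degree_X_le)
        (degree_C_le.trans (by norm_num)))
    refine lt_of_le_of_lt h2 ?_
    exact_mod_cast hp.one_lt
  have haev : aeval α (X ^ p - X - C a : F[X]) = 0 := by
    simp only [map_sub, map_pow, aeval_X, aeval_C]
    rw [hα]; ring
  have hαint : IsIntegral F α := ⟨_, hfmon, haev⟩
  -- degrees via Artin-Schreier
  have hd : (minpoly F α).natDegree = p := AS_deg p a hno α hα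
  have htop : F⟮α⟯ = ⊤ := by
    apply IntermediateField.toSubalgebra_injective
    rw [IntermediateField.adjoin_simple_toSubalgebra_of_isAlgebraic hαint.isAlgebraic, hadj,
      IntermediateField.top_toSubalgebra]
  have hβ1 : β - 1 ≠ 0 := by
    intro h
    have : α * (β - 1) = φ a := by rw [mul_sub, mul_one, hαβ]; ring
    rw [h, mul_zero] at this
    exact ha' this.symm
  have hmem : α ∈ F⟮β⟯ := by
    have hβmem : β ∈ F⟮β⟯ := mem_adjoin_simple_self F β
    have h1 : (β - 1)⁻¹ ∈ F⟮β⟯ := inv_mem (sub_mem hβmem (one_mem _))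
    have h2 : φ a * (β - 1)⁻¹ ∈ F⟮β⟯ := mul_mem (IntermediateField.algebraMap_mem _ a) h1
    have : α = φ a * (β - 1)⁻¹ := by
      field_simp
      rw [mul_sub, mul_one, hαβ]; ring
    rwa [this]
  have hβtop : F⟮β⟯ = ⊤ := top_unique (htop ▸ (adjoin_simple_le_iff.mpr hmem))
  have hdegβ : (minpoly F β).natDegree = p := by
    rw [← IntermediateField.adjoin.finrank hβint, hβtop.trans htop.symm,
      IntermediateField.adjoin.finrank hαint, hd]
  -- conclude
  obtain ⟨c, hc⟩ := minpoly.dvd F β hg0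
  have hm0 : minpoly F β ≠ 0 := minpoly.ne_zero hβint
  have hc0 : c ≠ 0 := by
    intro h
    rw [h, mul_zero] at hc
    exact hgmonic.ne_zero hc
  have hcdeg : c.natDegree = 0 := by
    have := hgdeg
    rw [hc, natDegree_mul hm0 hc0, hdegβ] at this
    omega
  have hcm : c.Monic := by
    have := hgmonic
    rw [hc] at this
    have h1 : (minpoly F β * c).leadingCoeff = 1 := this
    rwa [leadingCoeff_mul, (minpoly.monic hβint).leadingCoeff, one_mul] at h1
  have : c = 1 := (hcm.natDegree_eq_zero).mp hcdeg
  rw [hc, this, mul_one]
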